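/- Fix T > 0 and for each real a with a·T < 1 let k^u(a) denote the unique k > |a| satisfying T·√(k² − a²) = arccos(a/k). Then lim_{a→−∞} k^u(a)/|a| = 1 and lim_{a→(1/T)⁻} k^u(a) = 1/T. -/

import Mathlib

open Real Filter Set

private lemma xcos_lt_sin {x : ℝ} (h0 : 0 < x) (hπ : x < Real.pi) :
    x * Real.cos x < Real.sin x := by
  rcases lt_or_ge x (Real.pi / 2) with h | h
  · have hc : 0 < Real.cos x := Real.cos_pos_of_mem_Ioo ⟨by linarith, h⟩
    have ht := Real.lt_tan h0 h
    rw [Real.tan_eq_sin_div_cos, lt_div_iff₀ hc] at ht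
    linarith
  · have hc : Real.cos x ≤ 0 :=
      Real.cos_nonpos_of_pi_div_two_le_of_le h (by linarith [Real.pi_pos])
    have hs : 0 < Real.sin x := Real.sin_pos_of_pos_of_lt_pi h0 hπ
    nlinarith

private lemma g_anti :
    StrictAntiOn (fun x : ℝ => x * Real.cos x / Real.sin x) (Set.Ioo 0 Real.pi) := by
  apply strictAntiOn_of_deriv_neg (convex_Ioo 0 Real.pi)
  · apply ContinuousOn.div (by fun_prop) (by fun_prop)
    intro x hx
    exact (Real.sin_pos_of_pos_of_lt_pi hx.1 hx.2).ne'
  · intro x hx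
    rw [interior_Ioo] at hx
    have hs : 0 < Real.sin x := Real.sin_pos_of_pos_of_lt_pi hx.1 hx.2
    have hd : HasDerivAt (fun x : ℝ => x * Real.cos x / Real.sin x)
        (((1 * Real.cos x + x * (-Real.sin x)) * Real.sin x
          - x * Real.cos x * Real.cos x) / Real.sin x ^ 2) x :=
      ((hasDerivAt_id x).mul (Real.hasDerivAt_cos x)).div (Real.hasDerivAt_sin x) hs.ne'
    rw [hd.deriv]
    apply div_neg_of_neg_of_pos
    · have h1 : Real.sin x * Real.cos x ≤ Real.sin x := by
        nlinarith [Real.cos_le_one x]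
      have h2 : Real.sin x < x := Real.sin_lt hx.1
      have h3 := Real.sin_sq_add_cos_sq x
      nlinarith
    · positivity

private lemma helper {T a k : ℝ} (hT : 0 < T) (hk : |a| < k)
    (heq : T * Real.sqrt (k ^ 2 - a ^ 2) = Real.arccos (a / k)) :
    0 < Real.arccos (a / k) ∧ Real.arccos (a / k) < Real.pi ∧
      k = Real.arccos (a / k) / (T * Real.sin (Real.arccos (a / k))) ∧
      1 / T ≤ k ∧
      a * T = Real.arccos (a / k) * Real.cos (Real.arccos (a / k)) /
        Real.sin (Real.arccos (a / k)) ∧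
      k ^ 2 ≤ a ^ 2 + (Real.pi / T) ^ 2 := by
  have hk0 : 0 < k := (abs_nonneg a).trans_lt hk
  obtain ⟨hka, hak⟩ := abs_lt.mp hk
  have hx1 : a / k < 1 := (div_lt_one hk0).mpr hak
  have hx2 : -1 < a / k := by rw [lt_div_iff₀ hk0]; linarith
  set θ := Real.arccos (a / k) with hθdef
  have hθ0 : 0 < θ := Real.arccos_pos.mpr hx1
  have hθπ : θ < Real.pi := by
    refine lt_of_le_of_ne (Real.arccos_le_pi _) fun h => ?_
    have := Real.arccos_eq_pi.mp h
    linarith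
  have hcos : Real.cos θ = a / k := Real.cos_arccos hx2.le hx1.le
  have hsinpos : 0 < Real.sin θ := Real.sin_pos_of_pos_of_lt_pi hθ0 hθπ
  have hsq0 : 0 ≤ k ^ 2 - a ^ 2 := by nlinarith
  have hsqrt : Real.sqrt (k ^ 2 - a ^ 2) = k * Real.sin θ := by
    rw [hθdef, Real.sin_arccos]
    rw [show 1 - (a / k) ^ 2 = (k ^ 2 - a ^ 2) / k ^ 2 by field_simp]
    rw [Real.sqrt_div hsq0, Real.sqrt_sq hk0.le]
    field_simp
  have heq' : T * (k * Real.sin θ) = θ := by rw [← hsqrt]; exact heq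
  have hkeq : k = θ / (T * Real.sin θ) := by
    field_simp
    linarith [heq']
  have hTk : 1 ≤ T * k := by
    have hsle : Real.sin θ ≤ θ := Real.sin_le hθ0.le
    nlinarith
  have h1T : 1 / T ≤ k := by
    rw [div_le_iff₀ hT]
    linarith [hTk, mul_comm T k]
  have ha : a = k * Real.cos θ := by rw [hcos]; field_simp
  have haT : a * T = θ * Real.cos θ / Real.sin θ := by
    rw [ha, eq_div_iff hsinpos.ne']
    linear_combination Real.cos θ * heq'
  have hbound : k ^ 2 ≤ a ^ 2 + (Real.pi / T) ^ 2 := by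
    have h2 : Real.sqrt (k ^ 2 - a ^ 2) ≤ Real.pi / T := by
      rw [le_div_iff₀ hT]
      have := Real.arccos_le_pi (a / k)
      linarith [heq, mul_comm T (Real.sqrt (k ^ 2 - a ^ 2))]
    have h3 : k ^ 2 - a ^ 2 ≤ (Real.pi / T) ^ 2 := by
      calc k ^ 2 - a ^ 2 = Real.sqrt (k ^ 2 - a ^ 2) ^ 2 := (Real.sq_sqrt hsq0).symm
        _ ≤ (Real.pi / T) ^ 2 := by
            apply pow_le_pow_left₀ (Real.sqrt_nonneg _) h2
    linarith
  exact ⟨hθ0, hθπ, hkeq, h1T, haT, hbound⟩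

theorem stmt2 (T : ℝ) (hT : 0 < T) (ku : ℝ → ℝ)
    (hku : ∀ a : ℝ, a * T < 1 →
      |a| < ku a ∧ T * Real.sqrt ((ku a) ^ 2 - a ^ 2) = Real.arccos (a / ku a)) :
    Filter.Tendsto (fun a : ℝ => ku a / |a|) Filter.atBot (nhds 1) ∧
    Filter.Tendsto ku (nhdsWithin (1 / T) (Set.Iio (1 / T))) (nhds (1 / T)) := by
  constructor
  · -- Part 1 : a → -∞
    have h1 : ∀ᶠ a : ℝ in atBot,
        1 ≤ ku a / |a| ∧ ku a / |a| ≤ Real.sqrt (1 + (Real.pi / T) ^ 2 / a ^ 2) := by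
      filter_upwards [eventually_lt_atBot (0 : ℝ)] with a ha
      have haT : a * T < 1 := by nlinarith
      obtain ⟨hk, heq⟩ := hku a haT
      have h0 : 0 < |a| := abs_pos.mpr ha.ne
      obtain ⟨_, _, _, _, _, hb⟩ := helper hT hk heq
      have hk0 : (0 : ℝ) < ku a := h0.trans hk
      constructor
      · rw [le_div_iff₀ h0]; linarith [hk]
      · have hsq : ku a ≤ Real.sqrt (a ^ 2 + (Real.pi / T) ^ 2) := by
          rw [show ku a = Real.sqrt ((ku a) ^ 2) from (Real.sqrt_sq hk0.le).symm]
          exact Real.sqrt_le_sqrt hb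
        have e1 : Real.sqrt (1 + (Real.pi / T) ^ 2 / a ^ 2)
            = Real.sqrt (a ^ 2 + (Real.pi / T) ^ 2) / |a| := by
          rw [← Real.sqrt_sq_eq_abs,
            ← Real.sqrt_div (by positivity : (0:ℝ) ≤ a ^ 2 + (Real.pi / T) ^ 2)]
          have ha' : a ≠ 0 := ha.ne
          congr 1
          field_simp
        rw [e1]
        exact div_le_div_of_nonneg_right hsq h0.le
    have hsq2 : Tendsto (fun a : ℝ => a ^ 2) atBot atTop := by
      have h := tendsto_abs_atBot_atTop (G := ℝ)
      have := h.atTop_mul_atTop₀ h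
      refine this.congr fun a => ?_
      rw [abs_mul_abs_self, sq]
    have hdiv : Tendsto (fun a : ℝ => (Real.pi / T) ^ 2 / a ^ 2) atBot (nhds 0) :=
      tendsto_const_nhds.div_atTop hsq2
    have hadd : Tendsto (fun a : ℝ => 1 + (Real.pi / T) ^ 2 / a ^ 2) atBot (nhds 1) := by
      have := tendsto_const_nhds.add hdiv (f := fun _ : ℝ => (1 : ℝ)) (x := atBot)
      simpa using this
    have hupper : Tendsto (fun a : ℝ => Real.sqrt (1 + (Real.pi / T) ^ 2 / a ^ 2))
        atBot (nhds 1) := by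
      have := (Real.continuous_sqrt.tendsto 1).comp hadd
      simpa [Function.comp_def] using this
    exact tendsto_of_tendsto_of_tendsto_of_le_of_le' tendsto_const_nhds hupper
      (h1.mono fun a h => h.1) (h1.mono fun a h => h.2)
  · -- Part 2 : a → (1/T)⁻
    have hT' : 0 < 1 / T := by positivity
    set L := nhdsWithin (1 / T) (Set.Iio (1 / T)) with hLdef
    set Θ : ℝ → ℝ := fun a => Real.arccos (a / ku a) with hΘdef
    have hE : ∀ᶠ a in L, a ∈ Set.Ioo 0 (1 / T) :=
      eventually_of_mem (Ioo_mem_nhdsLT hT') fun a ha => ha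
    -- Step A : Θ → 0 within Ioi 0
    have hΘ : Tendsto Θ L (nhdsWithin (0 : ℝ) (Set.Ioi 0)) := by
      rw [tendsto_nhdsWithin_iff]
      constructor
      · rw [Metric.tendsto_nhds]
        intro ε hε
        set η := min ε (Real.pi / 2) with hηdef
        have hη0 : 0 < η := lt_min hε (by positivity)
        have hηπ : η < Real.pi := (min_le_right _ _).trans_lt (by linarith [Real.pi_pos])
        have hsη : 0 < Real.sin η := Real.sin_pos_of_pos_of_lt_pi hη0 hηπ
        have hgη : η * Real.cos η / Real.sin η < 1 := by
          rw [div_lt_one hsη]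
          exact xcos_lt_sin hη0 hηπ
        set m := max 0 (η * Real.cos η / Real.sin η) with hmdef
        have hm0 : 0 ≤ m := le_max_left _ _
        have hm1 : m < 1 := max_lt one_pos hgη
        have hc : m / T < 1 / T := by gcongr
        filter_upwards [eventually_of_mem (Ioo_mem_nhdsLT hc) fun a ha => ha]
          with a ha
        have ha0 : 0 < a := (div_nonneg hm0 hT.le).trans_lt ha.1
        have haT : a * T < 1 := (lt_div_iff₀ hT).mp ha.2
        obtain ⟨hk, heq⟩ := hku a haT
        obtain ⟨hθ0, hθπ, _, _, hgθ, _⟩ := helper hT hk heq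
        have hmlt : m < a * T := by
          have h := ha.1
          rw [div_lt_iff₀ hT] at h
          linarith
        have hθη : Θ a < η := by
          by_contra hcon
          push_neg at hcon
          have h1 : Θ a * Real.cos (Θ a) / Real.sin (Θ a)
              ≤ η * Real.cos η / Real.sin η := by
            rcases eq_or_lt_of_le hcon with h | h
            · rw [← h]
            · exact (g_anti ⟨hη0, hηπ⟩ ⟨hθ0, hθπ⟩ h).le
          have h2 : a * T ≤ m := by
            rw [hgθ]
            exact h1.trans (le_max_right _ _)
          linarith
        have : dist (Θ a) 0 = Θ a := by
          rw [Real.dist_eq, sub_zero, abs_of_nonneg (Real.arccos_nonneg _)]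
        rw [this]
        exact hθη.trans_le (min_le_left _ _)
      · filter_upwards [hE] with a ha
        have haT : a * T < 1 := (lt_div_iff₀ hT).mp ha.2
        obtain ⟨hk, heq⟩ := hku a haT
        obtain ⟨hθ0, _, _, _, _, _⟩ := helper hT hk heq
        exact hθ0
    -- Step B : x / sin x → 1 as x → 0, x ≠ 0
    have hslope : Tendsto (fun x : ℝ => Real.sin x / x)
        (nhdsWithin (0 : ℝ) {(0 : ℝ)}ᶜ) (nhds 1) := by
      have h := Real.hasDerivAt_sin 0
      rw [hasDerivAt_iff_tendsto_slope] at h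
      rw [Real.cos_zero] at h
      refine h.congr fun x => ?_
      rw [slope_def_field, Real.sin_zero, sub_zero, sub_zero]
    have hx_div_sin : Tendsto (fun x : ℝ => x / Real.sin x)
        (nhdsWithin (0 : ℝ) {(0 : ℝ)}ᶜ) (nhds 1) := by
      have := hslope.inv₀ one_ne_zero
      simpa [inv_div] using this
    -- Step C : assemble
    have hΘne : Tendsto Θ L (nhdsWithin (0 : ℝ) {(0 : ℝ)}ᶜ) :=
      hΘ.mono_right (nhdsWithin_mono 0 fun x hx => hx.ne')
    have hcomp : Tendsto (fun a => Θ a / Real.sin (Θ a)) L (nhds 1) :=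
      hx_div_sin.comp hΘne
    have hfinal : Tendsto (fun a => Θ a / Real.sin (Θ a) / T) L (nhds (1 / T)) :=
      hcomp.div_const T
    refine hfinal.congr' ?_
    filter_upwards [hE] with a ha
    have haT : a * T < 1 := (lt_div_iff₀ hT).mp ha.2
    obtain ⟨hk, heq⟩ := hku a haT
    obtain ⟨_, _, hkeq, _, _, _⟩ := helper hT hk heq
    rw [hkeq]
    rw [div_div, mul_comm]
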